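/- Let τ be a nonnegative integer with τ < deg(m_i) for all i ∈ {1, …, L} and τ < max_{1 ≤ i ≤ L} τ_{i(⌊(w^{(i)} − 1)/2⌋ + 1)}. Then every c(x) ∈ F[x] with deg(c) < deg(M) such that deg([c]_{m_i}) ≤ τ for all i ∈ {1, …, L} satisfies deg(c) ≤ τ. (Robust Chinese Remainder Theorem for polynomials: if all residues of a polynomial a(x) with deg(a) < deg(M) are corrupted by errors of degree at most τ, then a(x) can be reconstructed with reconstruction error of degree at most τ; equivalently, two polynomials of degree less than deg(M) whose residues modulo every m_i differ by degree at most τ themselves differ by degree at most τ.) -/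

import Mathlib

open Polynomial
open scoped Classical

/-- The code distance of the polynomial remainder code with moduli `m i`, `i ∈ s`. -/
noncomputable def codeDist {F : Type*} [Field F] {ι : Type*} (s : Finset ι)
    (m : ι → Polynomial F) : ℕ :=
  sInf {k | ∃ a : Polynomial F, a ≠ 0 ∧ a.degree < (s.lcm m).degree ∧
    (s.filter fun i => ¬ m i ∣ a).card = k}

/-- The `j`-th smallest element (1-indexed) of a multiset of natural numbers. -/
noncomputable def nthSmallest (s : Multiset ℕ) (j : ℕ) : ℕ :=
  (s.sort (· ≤ ·)).getD (j - 1) 0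

lemma filter_card_le_of_nth {s : Multiset ℕ} {j τ : ℕ}
    (h : τ < nthSmallest s (j + 1)) :
    (s.filter (fun x => x ≤ τ)).card ≤ j := by
  classical
  unfold nthSmallest at h
  simp only [Nat.add_sub_cancel] at h
  set l := s.sort (· ≤ ·) with hldef
  have hsort : l.Pairwise (· ≤ ·) := s.pairwise_sort _
  have hj : j < l.length := by
    by_contra hge
    rw [List.getD_eq_default _ _ (le_of_not_gt hge)] at h
    omega
  have hs : s = ↑l := (s.sort_eq _).symm
  rw [hs, Multiset.filter_coe, Multiset.coe_card]
  have hdrop : ∀ x ∈ l.drop j, ¬ x ≤ τ := by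
    intro x hx
    obtain ⟨k, hk, rfl⟩ := List.getElem_of_mem hx
    rw [List.getElem_drop]
    have h1 : l.getD j 0 = l.get ⟨j, hj⟩ := List.getD_eq_getElem _ _ hj
    have h2 : l.get ⟨j, hj⟩ ≤ l.get ⟨j + k, by rw [List.length_drop] at hk; omega⟩ :=
      hsort.rel_get_of_le (by simp [Fin.le_def])
    simp only [List.get_eq_getElem] at h1 h2
    rw [h1] at h
    omega
  have hfd : (l.drop j).filter (fun x => x ≤ τ) = [] := by
    rw [List.filter_eq_nil_iff]
    intro x hx
    simpa using hdrop x hx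
  calc (l.filter (fun x => x ≤ τ)).length
      = ((l.take j ++ l.drop j).filter (fun x => x ≤ τ)).length := by
        rw [List.take_append_drop]
    _ = ((l.take j).filter (fun x => x ≤ τ)).length := by
        rw [List.filter_append, hfd, List.append_nil]
    _ ≤ (l.take j).length := List.length_filter_le _ _
    _ ≤ j := by simp

/-- robust CRT for polynomials. If
`τ < max_{1≤i≤L} τ_{i(⌊(w⁽ⁱ⁾−1)/2⌋+1)}` (and `τ < deg m_i` for all `i`), then any
`c` with `deg c < deg M` all of whose residues `[c]_{m_i}` have degree at most `τ`
itself has degree at most `τ`. -/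
theorem stmt6 {F : Type*} [Field F] {L : ℕ} (hL : 2 ≤ L)
    (m : Fin L → Polynomial F)
    (hmonic : ∀ i, (m i).Monic)
    (hdist : Function.Injective m)
    (hdeg : ∀ i, 0 < (m i).degree)
    (hm_lt : ∀ i, (m i).degree < (Finset.univ.lcm m).degree)
    (w : Fin L → ℕ)
    (hw : ∀ i, w i = codeDist (Finset.univ.erase i)
      (fun j => m j /ₘ gcd (m i) (m j)))
    (τ : ℕ)
    (hτm : ∀ i, (τ : WithBot ℕ) < (m i).degree)
    (hτ : τ < Finset.univ.sup (fun i : Fin L => nthSmallest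
      ((Finset.univ.erase i).val.map fun k => (gcd (m i) (m k)).natDegree)
      ((w i - 1) / 2 + 1))) :
    ∀ c : Polynomial F, c.degree < (Finset.univ.lcm m).degree →
      (∀ i, (c %ₘ m i).degree ≤ (τ : WithBot ℕ)) →
      c.degree ≤ (τ : WithBot ℕ) := by
  classical
  intro c hc hres
  -- choose i achieving the sup
  obtain ⟨i, -, hi⟩ := Finset.lt_sup_iff.mp hτ
  -- basic facts about gcds
  have hgcd0 : ∀ k, gcd (m i) (m k) ≠ 0 := fun k h =>
    (hmonic i).ne_zero (eq_zero_of_zero_dvd (h ▸ gcd_dvd_left (m i) (m k)))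
  have hgcdm : ∀ k, (gcd (m i) (m k)).Monic := fun k => by
    have := Polynomial.monic_normalize (hgcd0 k)
    rwa [normalize_gcd] at this
  set r : Polynomial F := c %ₘ m i with hrdef
  set a : Polynomial F := c - r with hadef
  have hai : m i ∣ a := by
    refine ⟨c /ₘ m i, ?_⟩
    rw [hadef, hrdef, Polynomial.modByMonic_eq_sub_mul_div c (m i)]
    ring
  -- residues agree for large gcd
  have hres_eq : ∀ k, τ < (gcd (m i) (m k)).natDegree → c %ₘ m k = r := by
    intro k hk
    have hdk : gcd (m i) (m k) ∣ (c %ₘ m k) - r := by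
      have h1 : m k ∣ c - c %ₘ m k :=
        ⟨c /ₘ m k, by rw [Polynomial.modByMonic_eq_sub_mul_div c (m k)]; ring⟩
      have h2 : m i ∣ c - r := hai
      have h3 : gcd (m i) (m k) ∣ c - c %ₘ m k := dvd_trans (gcd_dvd_right _ _) h1
      have h4 : gcd (m i) (m k) ∣ c - r := dvd_trans (gcd_dvd_left _ _) h2
      have : (c %ₘ m k) - r = (c - r) - (c - c %ₘ m k) := by ring
      rw [this]
      exact dvd_sub h4 h3
    by_contra hne
    have hne' : (c %ₘ m k) - r ≠ 0 := sub_ne_zero.mpr hne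
    have hdeg1 : (gcd (m i) (m k)).degree ≤ ((c %ₘ m k) - r).degree :=
      Polynomial.degree_le_of_dvd hdk hne'
    have hdeg2 : ((c %ₘ m k) - r).degree ≤ (τ : WithBot ℕ) :=
      le_trans (Polynomial.degree_sub_le _ _) (max_le (hres k) (hres i))
    have hdeg3 : (τ : WithBot ℕ) < (gcd (m i) (m k)).degree := by
      rw [Polynomial.degree_eq_natDegree (hgcd0 k)]
      exact_mod_cast hk
    exact absurd (lt_of_lt_of_le hdeg3 (le_trans hdeg1 hdeg2)) (lt_irrefl _)
  -- the moduli of the punctured code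
  set Γ : Fin L → Polynomial F := fun j => m j /ₘ gcd (m i) (m j) with hΓdef
  set Lc : Polynomial F := (Finset.univ.erase i).lcm Γ with hLcdef
  have hΓeq : ∀ k, m k = gcd (m i) (m k) * Γ k := by
    intro k
    rw [hΓdef]
    simp only
    rw [Polynomial.divByMonic_eq_div _ (hgcdm k)]
    exact (EuclideanDomain.mul_div_cancel' (hgcd0 k) (gcd_dvd_right _ _)).symm
  have hΓ0 : ∀ k, Γ k ≠ 0 := by
    intro k h
    apply (hmonic k).ne_zero
    rw [hΓeq k, h, mul_zero]
  have hLc0 : Lc ≠ 0 := by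
    rw [hLcdef]
    intro h
    rw [Finset.lcm_eq_zero_iff] at h
    obtain ⟨k, -, hk⟩ := h
    exact hΓ0 k hk
  -- M divides m i * Lc
  have hMdvd : Finset.univ.lcm m ∣ m i * Lc := by
    apply Finset.lcm_dvd
    intro k _
    by_cases hki : k = i
    · subst hki; exact dvd_mul_right _ _
    · have hkmem : k ∈ Finset.univ.erase i := Finset.mem_erase.mpr ⟨hki, Finset.mem_univ k⟩
      have h1 : Γ k ∣ Lc := Finset.dvd_lcm hkmem
      obtain ⟨e, he⟩ : gcd (m i) (m k) ∣ m i := gcd_dvd_left _ _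
      calc m k = gcd (m i) (m k) * Γ k := hΓeq k
        _ ∣ (gcd (m i) (m k) * e) * Lc := by
            obtain ⟨t, ht⟩ := h1
            exact ⟨e * t, by rw [ht]; ring⟩
        _ = m i * Lc := by rw [← he]
  have hdegM : (Finset.univ.lcm m).degree ≤ (m i).degree + Lc.degree := by
    have := Polynomial.degree_le_of_dvd hMdvd (mul_ne_zero (hmonic i).ne_zero hLc0)
    rwa [Polynomial.degree_mul] at this
  -- the main claim : a = 0
  have ha0 : a = 0 := by
    by_contra ha
    obtain ⟨q, hq⟩ := hai
    have hq0 : q ≠ 0 := by rintro rfl; rw [mul_zero] at hq; exact ha hq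
    -- degree of q
    have hdega : a.degree < (Finset.univ.lcm m).degree := by
      rw [hadef]
      refine lt_of_le_of_lt (Polynomial.degree_sub_le _ _) (max_lt hc ?_)
      exact lt_of_le_of_lt (hres i) (lt_trans (hτm i) (hm_lt i))
    have hdegq : q.degree < Lc.degree := by
      have h1 : (m i).degree + q.degree < (m i).degree + Lc.degree := by
        rw [← Polynomial.degree_mul, ← hq]
        exact lt_of_lt_of_le hdega hdegM
      have h2 : (m i).degree ≠ ⊥ := by
        rw [Ne, Polynomial.degree_eq_bot]
        exact (hmonic i).ne_zero
      exact (WithBot.add_lt_add_iff_left h2).mp h1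
    -- for k with large gcd, Γ k divides q
    have hΓdvd : ∀ k, k ≠ i → τ < (gcd (m i) (m k)).natDegree → Γ k ∣ q := by
      intro k hki hk
      have hmk : m k ∣ a := by
        have h1 : m k ∣ c - c %ₘ m k :=
          ⟨c /ₘ m k, by rw [Polynomial.modByMonic_eq_sub_mul_div c (m k)]; ring⟩
        rwa [hres_eq k hk] at h1
      obtain ⟨e, he⟩ : gcd (m i) (m k) ∣ m i := gcd_dvd_left _ _
      have hdvd1 : gcd (m i) (m k) * Γ k ∣ gcd (m i) (m k) * (e * q) := by
        rw [← hΓeq k, ← mul_assoc, ← he, ← hq]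
        exact hmk
      have hdvd2 : Γ k ∣ e * q := (mul_dvd_mul_iff_left (hgcd0 k)).mp hdvd1
      have hcop : IsCoprime (Γ k) e := by
        have h1 : Γ k = m k / gcd (m i) (m k) := by
          rw [hΓdef]; exact Polynomial.divByMonic_eq_div _ (hgcdm k)
        have h2 : e = m i / gcd (m i) (m k) := by
          have h3 := EuclideanDomain.mul_div_cancel' (hgcd0 k) (gcd_dvd_left (m i) (m k))
          apply mul_left_cancel₀ (hgcd0 k)
          rw [h3, ← he]
        rw [h1, h2]
        exact (isCoprime_div_gcd_div_gcd (hmonic k).ne_zero).symm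
      exact hcop.dvd_of_dvd_mul_left hdvd2
    -- counting
    set T : Finset (Fin L) := (Finset.univ.erase i).filter (fun j => ¬ Γ j ∣ q) with hTdef
    have hwT : w i ≤ T.card := by
      rw [hw i]
      exact Nat.sInf_le ⟨q, hq0, hdegq, rfl⟩
    set B : Finset (Fin L) :=
      (Finset.univ.erase i).filter (fun k => (gcd (m i) (m k)).natDegree ≤ τ) with hBdef
    have hTB : T ⊆ B := by
      intro k hk
      rw [hTdef, Finset.mem_filter] at hk
      rw [hBdef, Finset.mem_filter]
      refine ⟨hk.1, ?_⟩
      by_contra hgt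
      exact hk.2 (hΓdvd k (Finset.mem_erase.mp hk.1).1 (by omega))
    have hB : B.card ≤ (w i - 1) / 2 := by
      have := filter_card_le_of_nth hi
      rw [hBdef]
      calc (Finset.filter (fun k => (gcd (m i) (m k)).natDegree ≤ τ)
              (Finset.univ.erase i)).card
          = Multiset.card ((Finset.univ.erase i).val.filter
              (fun k => (gcd (m i) (m k)).natDegree ≤ τ)) := by
            rfl
        _ = Multiset.card (((Finset.univ.erase i).val.map
              (fun k => (gcd (m i) (m k)).natDegree)).filter (fun x => x ≤ τ)) := by
            rw [Multiset.filter_map]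
            rw [Multiset.card_map]
            rfl
        _ ≤ (w i - 1) / 2 := this
    have hT0 : T.card = 0 := by
      have h1 := Finset.card_le_card hTB
      omega
    -- then Lc divides q, contradiction with degrees
    have hLcq : Lc ∣ q := by
      rw [hLcdef]
      apply Finset.lcm_dvd
      intro k hk
      by_contra hnd
      have : k ∈ T := by rw [hTdef, Finset.mem_filter]; exact ⟨hk, hnd⟩
      rw [Finset.card_eq_zero] at hT0
      rw [hT0] at this
      exact absurd this (Finset.notMem_empty k)
    exact absurd (Polynomial.degree_le_of_dvd hLcq hq0) (not_le.mpr hdegq)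
  have hcr : c = r := by
    have := sub_eq_zero.mp ha0
    exact this
  rw [hcr]
  exact hres i
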